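/- There exists a constant C₂ > 0, independent of N, such that for every integer N ≥ 2 and every v ∈ V_h^(2), the discrete Poincaré inequality ‖v‖²_{V²} ≤ C₂ ( ‖δ⁻₁ v‖²_{W²} + ‖δ⁻₂ v‖²_{M} ) holds. -/

import Mathlib

open Finset

noncomputable section

/-- mesh size `h = 1/N` -/
def gh (N : ℕ) : ℝ := 1 / (N : ℝ)

/-- weights `ρ_0 = ρ_N = 1/2`, `ρ_k = 1` otherwise -/
def rho (N k : ℕ) : ℝ := if k = 0 ∨ k = N then 1/2 else 1

/-- membership in `V_h^(1)`: `v i j` denotes `v_{i, j-1/2}` for `0 ≤ i ≤ N`, `0 ≤ j ≤ N+1`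
(index `j` corresponds to the half-integer ordinate `j - 1/2`). -/
def inV1 (N : ℕ) (v : ℕ → ℕ → ℝ) : Prop :=
  (∀ j, v 0 j = 0) ∧ (∀ j, v N j = 0) ∧
  (∀ i, v i 0 = - v i 1) ∧ (∀ i, v i (N+1) = - v i N)

/-- membership in `V_h^(2)`: `v i j` denotes `v_{i-1/2, j}` for `0 ≤ i ≤ N+1`, `0 ≤ j ≤ N`. -/
def inV2 (N : ℕ) (v : ℕ → ℕ → ℝ) : Prop :=
  (∀ i, v i 0 = 0) ∧ (∀ i, v i N = 0) ∧
  (∀ j, v 0 j = - v 1 j) ∧ (∀ j, v (N+1) j = - v N j)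

/-- membership in `M_h`: `q i j` denotes `q_{i-1/2, j-1/2}` for `1 ≤ i, j ≤ N`, discrete mean zero. -/
def inM (N : ℕ) (q : ℕ → ℕ → ℝ) : Prop :=
  ∑ i ∈ Icc 1 N, ∑ j ∈ Icc 1 N, q i j = 0

/-- `(·,·)_{M_h}` inner product (cell centers `1 ≤ i, j ≤ N`). -/
def innerM (N : ℕ) (q r : ℕ → ℕ → ℝ) : ℝ :=
  gh N ^ 2 * ∑ i ∈ Icc 1 N, ∑ j ∈ Icc 1 N, q i j * r i j

/-- `(·,·)_{V_h^(1)}` inner product (nodes `(i, j-1/2)`, `1 ≤ i ≤ N-1`, `1 ≤ j ≤ N`). -/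
def innerV1 (N : ℕ) (v w : ℕ → ℕ → ℝ) : ℝ :=
  gh N ^ 2 * ∑ i ∈ Icc 1 (N-1), ∑ j ∈ Icc 1 N, v i j * w i j

/-- `(·,·)_{V_h^(2)}` inner product (nodes `(i-1/2, j)`, `1 ≤ i ≤ N`, `1 ≤ j ≤ N-1`). -/
def innerV2 (N : ℕ) (v w : ℕ → ℕ → ℝ) : ℝ :=
  gh N ^ 2 * ∑ i ∈ Icc 1 N, ∑ j ∈ Icc 1 (N-1), v i j * w i j

/-- `(·,·)_{W_h^(1)}` inner product (vertices `1 ≤ i ≤ N-1`, `0 ≤ j ≤ N`, weights `ρ_j`). -/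
def innerW1 (N : ℕ) (v w : ℕ → ℕ → ℝ) : ℝ :=
  gh N ^ 2 * ∑ i ∈ Icc 1 (N-1), ∑ j ∈ Icc 0 N, rho N j * (v i j * w i j)

/-- `(·,·)_{W_h^(2)}` inner product (vertices `0 ≤ i ≤ N`, `1 ≤ j ≤ N-1`, weights `ρ_i`). -/
def innerW2 (N : ℕ) (v w : ℕ → ℕ → ℝ) : ℝ :=
  gh N ^ 2 * ∑ i ∈ Icc 0 N, ∑ j ∈ Icc 1 (N-1), rho N i * (v i j * w i j)

/-- `δ⁻₁` of a `V_h^(1)` function, evaluated at the cell center `(i-1/2, j-1/2)`. -/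
def d1V1 (N : ℕ) (v : ℕ → ℕ → ℝ) : ℕ → ℕ → ℝ := fun i j => (v i j - v (i-1) j) / gh N

/-- `δ⁻₂` of a `V_h^(1)` function, evaluated at the vertex `(i, j)`. -/
def d2V1 (N : ℕ) (v : ℕ → ℕ → ℝ) : ℕ → ℕ → ℝ := fun i j => (v i (j+1) - v i j) / gh N

/-- `δ⁻₁` of a `V_h^(2)` function, evaluated at the vertex `(i, j)`. -/
def d1V2 (N : ℕ) (v : ℕ → ℕ → ℝ) : ℕ → ℕ → ℝ := fun i j => (v (i+1) j - v i j) / gh N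

/-- `δ⁻₂` of a `V_h^(2)` function, evaluated at the cell center `(i-1/2, j-1/2)`. -/
def d2V2 (N : ℕ) (v : ℕ → ℕ → ℝ) : ℕ → ℕ → ℝ := fun i j => (v i j - v i (j-1)) / gh N

/-- `δ⁺₁` of a cell-centered function, evaluated at the node `(i, j-1/2)`. -/
def d1pM (N : ℕ) (q : ℕ → ℕ → ℝ) : ℕ → ℕ → ℝ := fun i j => (q (i+1) j - q i j) / gh N

/-- `δ⁺₂` of a cell-centered function, evaluated at the node `(i-1/2, j)`. -/
def d2pM (N : ℕ) (q : ℕ → ℕ → ℝ) : ℕ → ℕ → ℝ := fun i j => (q i (j+1) - q i j) / gh N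

/-- the five-point discrete Laplacian `Δ_h = δ⁺₁δ⁻₁ + δ⁺₂δ⁻₂`. -/
def lap (N : ℕ) (v : ℕ → ℕ → ℝ) : ℕ → ℕ → ℝ := fun i j =>
  (v (i+1) j - 2 * v i j + v (i-1) j) / gh N ^ 2
    + (v i (j+1) - 2 * v i j + v i (j-1)) / gh N ^ 2

/-- squared discrete `H¹` seminorm
`|v|₁² = ‖δ⁻₁v¹‖²_M + ‖δ⁻₂v¹‖²_{W¹} + ‖δ⁻₁v²‖²_{W²} + ‖δ⁻₂v²‖²_M`. -/
def H1semisq (N : ℕ) (v1 v2 : ℕ → ℕ → ℝ) : ℝ :=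
  innerM N (d1V1 N v1) (d1V1 N v1) + innerW1 N (d2V1 N v1) (d2V1 N v1)
    + innerW2 N (d1V2 N v2) (d1V2 N v2) + innerM N (d2V2 N v2) (d2V2 N v2)

/-- discrete `H¹` seminorm `|v|₁`. -/
def H1semi (N : ℕ) (v1 v2 : ℕ → ℕ → ℝ) : ℝ := Real.sqrt (H1semisq N v1 v2)

/-- `(e¹, e², e_p)` satisfies the discrete MAC Stokes system with residuals `(R¹, R², R)`. -/
def StokesSys (N : ℕ) (e1 e2 ep R1 R2 R : ℕ → ℕ → ℝ) : Prop :=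
  (∀ i ∈ Icc 1 (N-1), ∀ j ∈ Icc 1 N, -lap N e1 i j + d1pM N ep i j = R1 i j) ∧
  (∀ i ∈ Icc 1 N, ∀ j ∈ Icc 1 (N-1), -lap N e2 i j + d2pM N ep i j = R2 i j) ∧
  (∀ i ∈ Icc 1 N, ∀ j ∈ Icc 1 N, d1V1 N e1 i j + d2V2 N e2 i j = R i j)

lemma tele_aux (g : ℕ → ℝ) (j : ℕ) : ∑ k ∈ Icc 1 j, (g k - g (k-1)) = g j - g 0 := by
  induction j with
  | zero => simp
  | succ n ih =>
    rw [Finset.sum_Icc_succ_top (by omega : 1 ≤ n+1), ih]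
    simp

/-- discrete Poincaré inequality on `V_h^(2)`:
`‖v‖²_{V²} ≤ C₂ (‖δ⁻₁ v‖²_{W²} + ‖δ⁻₂ v‖²_{M})` with `C₂` independent of `N`. -/
theorem discrete_poincare_2 :
    ∃ C₂ : ℝ, 0 < C₂ ∧ ∀ N : ℕ, 2 ≤ N → ∀ v : ℕ → ℕ → ℝ, inV2 N v →
      innerV2 N v v
        ≤ C₂ * (innerW2 N (d1V2 N v) (d1V2 N v) + innerM N (d2V2 N v) (d2V2 N v)) := by
  refine ⟨1, one_pos, ?_⟩
  intro N hN v hv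
  have hN0 : (0:ℝ) < N := by
    have : (2:ℝ) ≤ N := by exact_mod_cast hN
    linarith
  have hgh : gh N = 1/(N:ℝ) := rfl
  have hghpos : 0 < gh N := by rw [hgh]; positivity
  obtain ⟨h0, hNN, _, _⟩ := hv
  -- the W2 term is nonnegative
  have hW : 0 ≤ innerW2 N (d1V2 N v) (d1V2 N v) := by
    unfold innerW2
    apply mul_nonneg (by positivity)
    apply Finset.sum_nonneg; intro i _
    apply Finset.sum_nonneg; intro j _
    have hrho : 0 ≤ rho N i := by unfold rho; split <;> norm_num
    have h2 : d1V2 N v i j * d1V2 N v i j = (d1V2 N v i j)^2 := by ring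
    rw [h2]; positivity
  -- main estimate: innerV2 ≤ innerM
  have key : innerV2 N v v ≤ innerM N (d2V2 N v) (d2V2 N v) := by
    unfold innerV2 innerM
    have hstep : ∀ i, ∑ j ∈ Icc 1 (N-1), v i j * v i j
        ≤ (N:ℝ)^2 * ∑ k ∈ Icc 1 N, (v i k - v i (k-1))^2 := by
      intro i
      have hS : 0 ≤ ∑ k ∈ Icc 1 N, (v i k - v i (k-1))^2 := by positivity
      have hj : ∀ j ∈ Icc 1 (N-1), v i j * v i j
          ≤ (N:ℝ) * ∑ k ∈ Icc 1 N, (v i k - v i (k-1))^2 := by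
        intro j hjmem
        simp only [Finset.mem_Icc] at hjmem
        have htel : v i j = ∑ k ∈ Icc 1 j, (v i k - v i (k-1)) := by
          rw [tele_aux (fun k => v i k) j, h0 i, sub_zero]
        have hcs := Finset.sum_mul_sq_le_sq_mul_sq (Icc 1 j) (fun _ => (1:ℝ))
          (fun k => v i k - v i (k-1))
        simp only [one_pow, one_mul, Finset.sum_const, Nat.card_Icc, nsmul_eq_mul, mul_one] at hcs
        have hjN : ((j + 1 - 1 : ℕ):ℝ) ≤ (N:ℝ) := by
          have : j + 1 - 1 ≤ N := by omega
          exact_mod_cast this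
        have hsub : ∑ k ∈ Icc 1 j, (v i k - v i (k-1))^2
            ≤ ∑ k ∈ Icc 1 N, (v i k - v i (k-1))^2 := by
          apply Finset.sum_le_sum_of_subset_of_nonneg
          · apply Finset.Icc_subset_Icc_right; omega
          · intro k _ _; positivity
        calc v i j * v i j = (∑ k ∈ Icc 1 j, (v i k - v i (k-1)))^2 := by rw [← htel]; ring
          _ ≤ ((j + 1 - 1 : ℕ):ℝ) * ∑ k ∈ Icc 1 j, (v i k - v i (k-1))^2 := hcs
          _ ≤ (N:ℝ) * ∑ k ∈ Icc 1 N, (v i k - v i (k-1))^2 := by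
              apply mul_le_mul hjN hsub (by positivity) (by positivity)
      calc ∑ j ∈ Icc 1 (N-1), v i j * v i j
          ≤ ∑ _j ∈ Icc 1 (N-1), (N:ℝ) * ∑ k ∈ Icc 1 N, (v i k - v i (k-1))^2 :=
            Finset.sum_le_sum hj
        _ = ((N-1 + 1 - 1 : ℕ):ℝ) * ((N:ℝ) * ∑ k ∈ Icc 1 N, (v i k - v i (k-1))^2) := by
            rw [Finset.sum_const, Nat.card_Icc, nsmul_eq_mul]
        _ ≤ (N:ℝ) * ((N:ℝ) * ∑ k ∈ Icc 1 N, (v i k - v i (k-1))^2) := by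
            apply mul_le_mul_of_nonneg_right _ (by positivity)
            exact_mod_cast (by omega : N - 1 + 1 - 1 ≤ N)
        _ = (N:ℝ)^2 * ∑ k ∈ Icc 1 N, (v i k - v i (k-1))^2 := by ring
    have hd2 : ∀ i k, d2V2 N v i k * d2V2 N v i k = (v i k - v i (k-1))^2 / gh N ^ 2 := by
      intro i k; unfold d2V2; field_simp
    have hrhs : gh N ^ 2 * ∑ i ∈ Icc 1 N, ∑ j ∈ Icc 1 N, d2V2 N v i j * d2V2 N v i j
        = ∑ i ∈ Icc 1 N, ∑ k ∈ Icc 1 N, (v i k - v i (k-1))^2 := by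
      rw [Finset.mul_sum]
      apply Finset.sum_congr rfl; intro i _
      rw [Finset.mul_sum]
      apply Finset.sum_congr rfl; intro k _
      rw [hd2]; field_simp
    rw [hrhs]
    have hghN : gh N ^ 2 * (N:ℝ)^2 = 1 := by
      rw [hgh]; field_simp
    calc gh N ^ 2 * ∑ i ∈ Icc 1 N, ∑ j ∈ Icc 1 (N-1), v i j * v i j
        ≤ gh N ^ 2 * ∑ i ∈ Icc 1 N, (N:ℝ)^2 * ∑ k ∈ Icc 1 N, (v i k - v i (k-1))^2 := by
          apply mul_le_mul_of_nonneg_left _ (by positivity)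
          exact Finset.sum_le_sum fun i _ => hstep i
      _ = ∑ i ∈ Icc 1 N, ∑ k ∈ Icc 1 N, (v i k - v i (k-1))^2 := by
          rw [← Finset.mul_sum, ← mul_assoc, hghN, one_mul]
  linarith
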